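/- arXiv:1705.00606 — 3 statements merged into one kernel-verified Lean document; each statement's English description precedes it below -/
import Mathlib

section
/- Let Ω ⊂ ℝⁿ be an open set, E₀ ⊂ Ω a Borel set, a < b real numbers, and u_{E₀} := a·χ_{E₀} + b·χ_{Ω∖E₀}. If u ∈ L¹(Ω) satisfies ‖u − u_{E₀}‖_{L¹} ≤ (b−a)δ for some δ > 0, then for every s ∈ ℝ, min{ℒⁿ(E₀ ∖ {u ≤ s}), ℒⁿ({u ≤ s} ∖ E₀)} ≤ δ. -/
open scoped Classical
open MeasureTheory Set

/-- Level-set proposition. If `u` is within L¹ distance `(b-a)δ` of the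
two-valued function `u_{E₀} = a·χ_{E₀} + b·χ_{Ω∖E₀}` on `Ω`, then for every `s`, the
symmetric-difference quantity `α(E₀, {u ≤ s}) = min(ℒⁿ(E₀∖{u≤s}), ℒⁿ({u≤s}∖E₀))` is `≤ δ`. -/
theorem stmt0 {n : ℕ} (Ω E₀ : Set (Fin n → ℝ)) (hΩ : IsOpen Ω)
    (hE₀meas : MeasurableSet E₀) (hE₀ : E₀ ⊆ Ω)
    (a b : ℝ) (hab : a < b) (δ : ℝ) (hδ : 0 < δ)
    (u : (Fin n → ℝ) → ℝ)
    (hint : IntegrableOn (fun x => |u x - (if x ∈ E₀ then a else b)|) Ω volume)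
    (hL1 : ∫ x in Ω, |u x - (if x ∈ E₀ then a else b)| ∂volume ≤ (b - a) * δ)
    (s : ℝ) :
    min (volume (E₀ \ {x ∈ Ω | u x ≤ s})) (volume ({x ∈ Ω | u x ≤ s} \ E₀))
      ≤ ENNReal.ofReal δ := by
  set f : (Fin n → ℝ) → ℝ := fun x => |u x - (if x ∈ E₀ then a else b)| with hf
  set F : (Fin n → ℝ) → ENNReal := fun x => ENNReal.ofReal (f x) with hF
  have hΩm : MeasurableSet Ω := hΩ.measurableSet
  have hfae : AEMeasurable f (volume.restrict Ω) := hint.aemeasurable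
  have key : ENNReal.ofReal (∫ x in Ω, f x ∂volume) = ∫⁻ x in Ω, F x ∂volume :=
    MeasureTheory.ofReal_integral_eq_lintegral_ofReal hint
      (Filter.Eventually.of_forall fun x => abs_nonneg _)
  have hsplit : ∫⁻ x in Ω, F x ∂volume
      = (∫⁻ x in E₀, F x ∂volume) + ∫⁻ x in Ω \ E₀, F x ∂volume := by
    rw [← lintegral_union (hΩm.diff hE₀meas) Set.disjoint_sdiff_right,
      Set.union_diff_cancel hE₀]
  set c1 := ENNReal.ofReal (s - a) with hc1
  set c2 := ENNReal.ofReal (b - s) with hc2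
  set m1 := volume (E₀ \ {x ∈ Ω | u x ≤ s}) with hm1def
  set m2 := volume ({x ∈ Ω | u x ≤ s} \ E₀) with hm2def
  have hF1 : AEMeasurable F (volume.restrict E₀) :=
    (hfae.mono_measure (Measure.restrict_mono hE₀ le_rfl)).ennreal_ofReal
  have hF2 : AEMeasurable F (volume.restrict (Ω \ E₀)) :=
    (hfae.mono_measure (Measure.restrict_mono Set.diff_subset le_rfl)).ennreal_ofReal
  -- first Markov bound
  have h1 : c1 * m1 ≤ ∫⁻ x in E₀, F x ∂volume := by
    have hsub : m1 ≤ (volume.restrict E₀) {x | c1 ≤ F x} := by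
      rw [Measure.restrict_apply' hE₀meas]
      apply measure_mono
      rintro x ⟨hxE, hxn⟩
      refine ⟨?_, hxE⟩
      have hxΩ : x ∈ Ω := hE₀ hxE
      have hus : s < u x := by
        by_contra h
        exact hxn ⟨hxΩ, le_of_not_gt h⟩
      have : s - a ≤ f x := by
        simp only [hf, if_pos hxE]
        calc s - a ≤ u x - a := by linarith
          _ ≤ |u x - a| := le_abs_self _
      exact ENNReal.ofReal_le_ofReal this
    calc c1 * m1 ≤ c1 * (volume.restrict E₀) {x | c1 ≤ F x} := by
          exact mul_le_mul_right hsub c1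
      _ ≤ ∫⁻ x in E₀, F x ∂volume := mul_meas_ge_le_lintegral₀ hF1 c1
  -- second Markov bound
  have h2 : c2 * m2 ≤ ∫⁻ x in Ω \ E₀, F x ∂volume := by
    have hsub : m2 ≤ (volume.restrict (Ω \ E₀)) {x | c2 ≤ F x} := by
      rw [Measure.restrict_apply' (hΩm.diff hE₀meas)]
      apply measure_mono
      rintro x ⟨⟨hxΩ, hus⟩, hxE⟩
      refine ⟨?_, hxΩ, hxE⟩
      have : b - s ≤ f x := by
        simp only [hf, if_neg hxE]
        calc b - s ≤ b - u x := by linarith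
          _ ≤ |u x - b| := by rw [abs_sub_comm]; exact le_abs_self _
      exact ENNReal.ofReal_le_ofReal this
    calc c2 * m2 ≤ c2 * (volume.restrict (Ω \ E₀)) {x | c2 ≤ F x} := by
          exact mul_le_mul_right hsub c2
      _ ≤ ∫⁻ x in Ω \ E₀, F x ∂volume := mul_meas_ge_le_lintegral₀ hF2 c2
  -- combine
  have hba : ENNReal.ofReal (b - a) ≤ c1 + c2 := by
    have : (b : ℝ) - a = (s - a) + (b - s) := by ring
    rw [this]
    exact ENNReal.ofReal_add_le
  have hmain : ENNReal.ofReal (b - a) * min m1 m2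
      ≤ ENNReal.ofReal (b - a) * ENNReal.ofReal δ := by
    calc ENNReal.ofReal (b - a) * min m1 m2 ≤ (c1 + c2) * min m1 m2 :=
          mul_le_mul_left hba _
      _ = c1 * min m1 m2 + c2 * min m1 m2 := by rw [add_mul]
      _ ≤ c1 * m1 + c2 * m2 := by
          gcongr
          · exact min_le_left _ _
          · exact min_le_right _ _
      _ ≤ (∫⁻ x in E₀, F x ∂volume) + ∫⁻ x in Ω \ E₀, F x ∂volume := add_le_add h1 h2
      _ = ∫⁻ x in Ω, F x ∂volume := hsplit.symm
      _ = ENNReal.ofReal (∫ x in Ω, f x ∂volume) := key.symm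
      _ ≤ ENNReal.ofReal ((b - a) * δ) := ENNReal.ofReal_le_ofReal hL1
      _ = ENNReal.ofReal (b - a) * ENNReal.ofReal δ :=
          ENNReal.ofReal_mul (by linarith)
  have hne : ENNReal.ofReal (b - a) ≠ 0 := by
    simp [ENNReal.ofReal_eq_zero]; linarith
  exact (ENNReal.mul_le_mul_iff_right hne ENNReal.ofReal_ne_top).mp hmain
end

section
/- Let W : ℝ → [0,∞) be continuous with W > 0 on (a,b) and W(a) = W(b) = 0, a < c < b, and suppose ∫ₐᵇ W^{−1/2}(s) ds = ∞ near both endpoints. Then the solution z of z′(t) = √(W(z(t))), z(0) = c, with z(t) ∈ [a,b], is strictly increasing, defined for all t ∈ ℝ, and satisfies z(t) → a as t → −∞ and z(t) → b as t → +∞. -/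
open Set Filter Topology intervalIntegral

/-- heteroclinic transition profile. If `W ≥ 0` is continuous, vanishes
exactly at `a` and `b` on `[a,b]`, and `W^{-1/2}` is non-integrable near both wells, then
the solution of `z′ = √(W(z))`, `z(0) = c ∈ (a,b)`, with values in `[a,b]`, is strictly
increasing and converges to `a` at `−∞` and to `b` at `+∞`. -/
theorem stmt10 (W : ℝ → ℝ) (hWcont : Continuous W) (hWnonneg : ∀ s, 0 ≤ W s)
    (a b c : ℝ) (hac : a < c) (hcb : c < b)
    (hWa : W a = 0) (hWb : W b = 0) (hWpos : ∀ s ∈ Ioo a b, 0 < W s)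
    (hnonint₁ : ¬ IntervalIntegrable (fun s => 1 / Real.sqrt (W s)) MeasureTheory.volume a c)
    (hnonint₂ : ¬ IntervalIntegrable (fun s => 1 / Real.sqrt (W s)) MeasureTheory.volume c b)
    (z : ℝ → ℝ) (hz : ∀ t, HasDerivAt z (Real.sqrt (W (z t))) t)
    (hz0 : z 0 = c) (hzrange : ∀ t, z t ∈ Icc a b) :
    StrictMono z ∧ Tendsto z atBot (𝓝 a) ∧ Tendsto z atTop (𝓝 b) := by
  set g : ℝ → ℝ := fun s => 1 / Real.sqrt (W s) with hg_def
  have hzdiff : Differentiable ℝ z := fun t => (hz t).differentiableAt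
  have hzc : Continuous z := hzdiff.continuous
  have hmono : Monotone z := monotone_of_deriv_nonneg hzdiff fun t => by
    rw [(hz t).deriv]; exact Real.sqrt_nonneg _
  have hgcont : ContinuousOn g (Ioo a b) := by
    apply ContinuousOn.div continuousOn_const (Real.continuous_sqrt.comp hWcont).continuousOn
    intro x hx
    exact Real.sqrt_ne_zero'.mpr (hWpos x hx)
  have hgnonneg : ∀ x, 0 ≤ g x := fun x => one_div_nonneg.mpr (Real.sqrt_nonneg _)
  have hf'cont : Continuous fun s => Real.sqrt (W (z s)) :=
    Real.continuous_sqrt.comp (hWcont.comp hzc)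
  -- the solution never touches b
  have hltb : ∀ t, z t < b := by
    by_contra h
    push_neg at h
    obtain ⟨t₀, ht₀⟩ := h
    have hzt₀ : z t₀ = b := le_antisymm (hzrange t₀).2 ht₀
    set S : Set ℝ := {t | z t = b} with hS
    have hSne : S.Nonempty := ⟨t₀, hzt₀⟩
    have hSpos : ∀ t ∈ S, 0 < t := by
      intro t ht
      by_contra hle
      push_neg at hle
      have h2 := hmono hle
      rw [ht, hz0] at h2
      exact absurd h2 (not_le.mpr hcb)
    have hSbdd : BddBelow S := ⟨0, fun t ht => (hSpos t ht).le⟩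
    have hSclosed : IsClosed S := isClosed_eq hzc continuous_const
    set T := sInf S with hT
    have hTS : T ∈ S := hSclosed.csInf_mem hSne hSbdd
    have hTpos : 0 < T := hSpos T hTS
    have hzT : z T = b := hTS
    have hltT : ∀ t, 0 ≤ t → t < T → z t < b := fun t _ htT =>
      lt_of_le_of_ne (hzrange t).2 fun hb' =>
        absurd (csInf_le hSbdd hb') (not_le.mpr htT)
    have key : ∀ t, 0 ≤ t → t < T → (∫ x in c..z t, g x) = t := by
      intro t ht0 htT
      have hztb : z t < b := hltT t ht0 htT
      have himg : ∀ s ∈ uIcc (0:ℝ) t, z s ∈ Ioo a b := by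
        intro s hs
        rw [uIcc_of_le ht0] at hs
        refine ⟨lt_of_lt_of_le hac ?_, lt_of_le_of_lt (hmono hs.2) hztb⟩
        rw [← hz0]; exact hmono hs.1
      have hcv : (∫ s in (0:ℝ)..t, Real.sqrt (W (z s)) • (g ∘ z) s) = ∫ x in (z 0)..(z t), g x :=
        integral_comp_smul_deriv' (fun x _ => hz x) hf'cont.continuousOn
          (hgcont.mono (by rintro x ⟨s, hs, rfl⟩; exact himg s hs))
      rw [hz0] at hcv
      rw [← hcv]
      have hone : ∀ s ∈ uIcc (0:ℝ) t, Real.sqrt (W (z s)) • (g ∘ z) s = 1 := by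
        intro s hs
        have hpos := hWpos _ (himg s hs)
        have hsq : Real.sqrt (W (z s)) ≠ 0 := Real.sqrt_ne_zero'.mpr hpos
        simp only [hg_def, Function.comp_apply, smul_eq_mul]
        rw [mul_one_div, div_self hsq]
      rw [integral_congr hone]
      simp
    have hint : ∀ t, 0 ≤ t → t < T →
        MeasureTheory.IntegrableOn g (Ioc c (z t)) MeasureTheory.volume := by
      intro t ht0 htT
      have hsub : Icc c (z t) ⊆ Ioo a b := fun x hx =>
        ⟨lt_of_lt_of_le hac hx.1, lt_of_le_of_lt hx.2 (hltT t ht0 htT)⟩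
      exact ((hgcont.mono hsub).integrableOn_Icc).mono_set Ioc_subset_Icc_self
    set u : ℕ → ℝ := fun n => T - T / ((n : ℝ) + 1) with hu
    have hu0 : ∀ n, 0 ≤ u n := fun n =>
      sub_nonneg.mpr (div_le_self hTpos.le (le_add_of_nonneg_left (Nat.cast_nonneg n)))
    have huT : ∀ n, u n < T := fun n =>
      sub_lt_self T (div_pos hTpos (by positivity))
    have hulim : Tendsto u atTop (𝓝 T) := by
      have h1 : Tendsto (fun n : ℕ => T / ((n : ℝ) + 1)) atTop (𝓝 0) := by
        have h0 := (tendsto_const_div_atTop_nhds_zero_nat T).comp (tendsto_add_atTop_nat 1)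
        refine h0.congr fun n => ?_
        show T / ((n + 1 : ℕ) : ℝ) = T / ((n : ℝ) + 1)
        push_cast; ring
      simpa using tendsto_const_nhds.sub h1
    have hzul : Tendsto (fun n => z (u n)) atTop (𝓝 b) := by
      have := (hzc.tendsto T).comp hulim
      rwa [hzT] at this
    have hbound : ∀ n : ℕ, (∫ x in Ioc c (z (u n)), ‖g x‖) ≤ T := by
      intro n
      have hcz : c ≤ z (u n) := by rw [← hz0]; exact hmono (hu0 n)
      have hnorm : ∀ x, ‖g x‖ = g x := fun x => Real.norm_of_nonneg (hgnonneg x)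
      calc (∫ x in Ioc c (z (u n)), ‖g x‖) = ∫ x in Ioc c (z (u n)), g x := by
            simp only [hnorm]
        _ = ∫ x in c..z (u n), g x := (intervalIntegral.integral_of_le hcz).symm
        _ = u n := key _ (hu0 n) (huT n)
        _ ≤ T := (huT n).le
    have hIcb : MeasureTheory.IntegrableOn g (Ioc c b) MeasureTheory.volume :=
      MeasureTheory.integrableOn_Ioc_of_intervalIntegral_norm_bounded_right
        (fun n => hint (u n) (hu0 n) (huT n)) hzul (Eventually.of_forall hbound)
    exact hnonint₂ (by rw [intervalIntegrable_iff, uIoc_of_le hcb.le]; exact hIcb)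
  -- the solution never touches a
  have hgta : ∀ t, a < z t := by
    by_contra h
    push_neg at h
    obtain ⟨t₀, ht₀⟩ := h
    have hzt₀ : z t₀ = a := le_antisymm ht₀ (hzrange t₀).1
    set S : Set ℝ := {t | z t = a} with hS
    have hSne : S.Nonempty := ⟨t₀, hzt₀⟩
    have hSneg : ∀ t ∈ S, t < 0 := by
      intro t ht
      by_contra hle
      push_neg at hle
      have h2 := hmono hle
      rw [ht, hz0] at h2
      exact absurd h2 (not_le.mpr hac)
    have hSbdd : BddAbove S := ⟨0, fun t ht => (hSneg t ht).le⟩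
    have hSclosed : IsClosed S := isClosed_eq hzc continuous_const
    set T := sSup S with hT
    have hTS : T ∈ S := hSclosed.csSup_mem hSne hSbdd
    have hTneg : T < 0 := hSneg T hTS
    have hzT : z T = a := hTS
    have hgtT : ∀ t, t ≤ 0 → T < t → a < z t := fun t _ hTt =>
      lt_of_le_of_ne (hzrange t).1 fun ha' =>
        absurd (le_csSup hSbdd ha'.symm) (not_le.mpr hTt)
    have key : ∀ t, t ≤ 0 → T < t → (∫ x in z t..c, g x) = -t := by
      intro t ht0 hTt
      have hazt : a < z t := hgtT t ht0 hTt
      have himg : ∀ s ∈ uIcc t (0:ℝ), z s ∈ Ioo a b := by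
        intro s hs
        rw [uIcc_of_le ht0] at hs
        refine ⟨lt_of_lt_of_le hazt (hmono hs.1), lt_of_le_of_lt ?_ hcb⟩
        rw [← hz0]; exact hmono hs.2
      have hcv : (∫ s in t..(0:ℝ), Real.sqrt (W (z s)) • (g ∘ z) s) = ∫ x in (z t)..(z 0), g x :=
        integral_comp_smul_deriv' (fun x _ => hz x) hf'cont.continuousOn
          (hgcont.mono (by rintro x ⟨s, hs, rfl⟩; exact himg s hs))
      rw [hz0] at hcv
      rw [← hcv]
      have hone : ∀ s ∈ uIcc t (0:ℝ), Real.sqrt (W (z s)) • (g ∘ z) s = 1 := by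
        intro s hs
        have hpos := hWpos _ (himg s hs)
        have hsq : Real.sqrt (W (z s)) ≠ 0 := Real.sqrt_ne_zero'.mpr hpos
        simp only [hg_def, Function.comp_apply, smul_eq_mul]
        rw [mul_one_div, div_self hsq]
      rw [integral_congr hone]
      simp
    have hint : ∀ t, t ≤ 0 → T < t →
        MeasureTheory.IntegrableOn g (Ioc (z t) c) MeasureTheory.volume := by
      intro t ht0 hTt
      have hsub : Icc (z t) c ⊆ Ioo a b := fun x hx =>
        ⟨lt_of_lt_of_le (hgtT t ht0 hTt) hx.1, lt_of_le_of_lt hx.2 hcb⟩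
      exact ((hgcont.mono hsub).integrableOn_Icc).mono_set Ioc_subset_Icc_self
    set u : ℕ → ℝ := fun n => T - T / ((n : ℝ) + 1) with hu
    have hu0 : ∀ n, u n ≤ 0 := by
      intro n
      have hden : (0:ℝ) < (n : ℝ) + 1 := by positivity
      have h1 : T ≤ T / ((n : ℝ) + 1) := by
        rw [le_div_iff₀ hden]
        calc T * ((n : ℝ) + 1) ≤ T * 1 :=
              mul_le_mul_of_nonpos_left (le_add_of_nonneg_left (Nat.cast_nonneg n)) hTneg.le
          _ = T := mul_one T
      exact sub_nonpos.mpr h1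
    have huT : ∀ n, T < u n := fun n =>
      lt_sub_iff_add_lt.mpr (by
        have : T / ((n : ℝ) + 1) < 0 := div_neg_of_neg_of_pos hTneg (by positivity)
        linarith)
    have hulim : Tendsto u atTop (𝓝 T) := by
      have h1 : Tendsto (fun n : ℕ => T / ((n : ℝ) + 1)) atTop (𝓝 0) := by
        have h0 := (tendsto_const_div_atTop_nhds_zero_nat T).comp (tendsto_add_atTop_nat 1)
        refine h0.congr fun n => ?_
        show T / ((n + 1 : ℕ) : ℝ) = T / ((n : ℝ) + 1)
        push_cast; ring
      simpa using tendsto_const_nhds.sub h1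
    have hzul : Tendsto (fun n => z (u n)) atTop (𝓝 a) := by
      have := (hzc.tendsto T).comp hulim
      rwa [hzT] at this
    have hbound : ∀ n : ℕ, (∫ x in Ioc (z (u n)) c, ‖g x‖) ≤ -T := by
      intro n
      have hcz : z (u n) ≤ c := by rw [← hz0]; exact hmono (hu0 n)
      have hnorm : ∀ x, ‖g x‖ = g x := fun x => Real.norm_of_nonneg (hgnonneg x)
      calc (∫ x in Ioc (z (u n)) c, ‖g x‖) = ∫ x in Ioc (z (u n)) c, g x := by
            simp only [hnorm]
        _ = ∫ x in z (u n)..c, g x := (intervalIntegral.integral_of_le hcz).symm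
        _ = -(u n) := key _ (hu0 n) (huT n)
        _ ≤ -T := neg_le_neg (huT n).le
    have hIac : MeasureTheory.IntegrableOn g (Ioc a c) MeasureTheory.volume :=
      MeasureTheory.integrableOn_Ioc_of_intervalIntegral_norm_bounded_left
        (fun n => hint (u n) (hu0 n) (huT n)) hzul (Eventually.of_forall hbound)
    exact hnonint₁ (by rw [intervalIntegrable_iff, uIoc_of_le hac.le]; exact hIac)
  -- strict monotonicity
  have hsm : StrictMono z := strictMono_of_deriv_pos fun t => by
    rw [(hz t).deriv]
    exact Real.sqrt_pos.mpr (hWpos _ ⟨hgta t, hltb t⟩)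
  -- limits
  have hBddA : BddAbove (range z) := ⟨b, by rintro _ ⟨t, rfl⟩; exact (hzrange t).2⟩
  have hBddB : BddBelow (range z) := ⟨a, by rintro _ ⟨t, rfl⟩; exact (hzrange t).1⟩
  have htop : Tendsto z atTop (𝓝 (⨆ t, z t)) := tendsto_atTop_ciSup hmono hBddA
  have hbot : Tendsto z atBot (𝓝 (⨅ t, z t)) := tendsto_atBot_ciInf hmono hBddB
  have hLb : (⨆ t, z t) = b := by
    set L := ⨆ t, z t with hL
    have hLle : L ≤ b := ciSup_le fun t => (hzrange t).2
    rcases eq_or_lt_of_le hLle with h | h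
    · exact h
    · exfalso
      have hcL : c ≤ L := hz0 ▸ le_ciSup hBddA 0
      have hsub : Icc c L ⊆ Ioo a b := fun x hx =>
        ⟨lt_of_lt_of_le hac hx.1, lt_of_le_of_lt hx.2 h⟩
      obtain ⟨x₀, hx₀, hmin⟩ := isCompact_Icc.exists_isMinOn (nonempty_Icc.mpr hcL)
        (Real.continuous_sqrt.comp hWcont).continuousOn
      replace hmin := isMinOn_iff.mp hmin
      set m := Real.sqrt (W x₀) with hm
      have hmpos : 0 < m := Real.sqrt_pos.mpr (hWpos _ (hsub hx₀))
      have hglo : ∀ t : ℝ, 0 ≤ t → c + m * t ≤ z t := by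
        intro t ht
        have hmonog : MonotoneOn (fun s => z s - m * s) (Ici (0:ℝ)) := by
          apply monotoneOn_of_deriv_nonneg (convex_Ici 0)
          · exact (hzc.sub (continuous_const.mul continuous_id)).continuousOn
          · intro x _
            exact ((hzdiff x).sub ((differentiable_id.const_mul m) x)).differentiableWithinAt
          · intro x hx
            rw [interior_Ici] at hx
            have hd : HasDerivAt (fun s => z s - m * s) (Real.sqrt (W (z x)) - m) x :=
              (hz x).sub (by simpa using (hasDerivAt_id x).const_mul m)
            rw [hd.deriv]
            have hzx : z x ∈ Icc c L := ⟨hz0 ▸ hmono hx.le, le_ciSup hBddA x⟩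
            exact sub_nonneg.mpr (hmin _ hzx)
        have h2 := hmonog self_mem_Ici (mem_Ici.mpr ht) ht
        simp only [mul_zero, sub_zero, hz0] at h2
        linarith
      set t₁ := (b - c) / m + 1 with ht₁
      have ht₁0 : 0 ≤ t₁ := add_nonneg (div_nonneg (by linarith) hmpos.le) zero_le_one
      have h2 := hglo t₁ ht₁0
      have hzt : z t₁ ≤ b := (hzrange t₁).2
      have h3 : c + m * ((b - c) / m + 1) ≤ b := le_trans h2 hzt
      rw [mul_add, mul_one, mul_div_cancel₀ _ (ne_of_gt hmpos)] at h3
      linarith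
  have hLa : (⨅ t, z t) = a := by
    set L := ⨅ t, z t with hL
    have hLge : a ≤ L := le_ciInf fun t => (hzrange t).1
    rcases (eq_or_lt_of_le hLge) with h | h
    · exact h.symm
    · exfalso
      have hLc : L ≤ c := hz0 ▸ ciInf_le hBddB 0
      have hsub : Icc L c ⊆ Ioo a b := fun x hx =>
        ⟨lt_of_lt_of_le h hx.1, lt_of_le_of_lt hx.2 hcb⟩
      obtain ⟨x₀, hx₀, hmin⟩ := isCompact_Icc.exists_isMinOn (nonempty_Icc.mpr hLc)
        (Real.continuous_sqrt.comp hWcont).continuousOn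
      replace hmin := isMinOn_iff.mp hmin
      set m := Real.sqrt (W x₀) with hm
      have hmpos : 0 < m := Real.sqrt_pos.mpr (hWpos _ (hsub hx₀))
      have hglo : ∀ t : ℝ, t ≤ 0 → z t ≤ c + m * t := by
        intro t ht
        have hmonog : MonotoneOn (fun s => z s - m * s) (Iic (0:ℝ)) := by
          apply monotoneOn_of_deriv_nonneg (convex_Iic 0)
          · exact (hzc.sub (continuous_const.mul continuous_id)).continuousOn
          · intro x _
            exact ((hzdiff x).sub ((differentiable_id.const_mul m) x)).differentiableWithinAt
          · intro x hx
            rw [interior_Iic] at hx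
            have hd : HasDerivAt (fun s => z s - m * s) (Real.sqrt (W (z x)) - m) x :=
              (hz x).sub (by simpa using (hasDerivAt_id x).const_mul m)
            rw [hd.deriv]
            have hzx : z x ∈ Icc L c := ⟨ciInf_le hBddB x, hz0 ▸ hmono hx.le⟩
            exact sub_nonneg.mpr (hmin _ hzx)
        have h2 := hmonog (mem_Iic.mpr ht) self_mem_Iic ht
        simp only [mul_zero, sub_zero, hz0] at h2
        linarith
      set t₁ := -((c - a) / m + 1) with ht₁
      have ht₁0 : t₁ ≤ 0 := by
        have h4 : 0 ≤ (c - a) / m + 1 := add_nonneg (div_nonneg (by linarith) hmpos.le) zero_le_one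
        rw [ht₁]; linarith
      have h2 := hglo t₁ ht₁0
      have hzt : a ≤ z t₁ := (hzrange t₁).1
      have h3 : a ≤ c + m * -((c - a) / m + 1) := le_trans hzt h2
      rw [mul_neg, mul_add, mul_one, mul_div_cancel₀ _ (ne_of_gt hmpos)] at h3
      linarith
  exact ⟨hsm, hLa ▸ hbot, hLb ▸ htop⟩
end

section
/- Let z : ℝ → [a,b] be the solution of z′ = √(W(z)), z(0) = c, for a continuous W ≥ 0 vanishing exactly at a and b, with z(t) → a exponentially as t → −∞ and z(t) → b exponentially as t → +∞. Then the function τ ↦ ∫_ℝ (z(t − τ) − sgn_{a,b}(t)) dt is well-defined (the integrand is integrable), continuous, strictly decreasing, and surjective onto ℝ; in particular, for every r ∈ ℝ there is a unique τ with ∫_ℝ (z(t − τ) − sgn_{a,b}(t)) dt = r. -/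
open Set Filter Topology MeasureTheory

open intervalIntegral

/-- the function `τ ↦ ∫_ℝ (z(t−τ) − sgn_{a,b}(t)) dt` is well-defined,
continuous, strictly decreasing and surjective onto `ℝ`; in particular for every `r`
there is a unique `τ` solving `∫_ℝ (z(t−τ) − sgn_{a,b}(t)) dt = r`. -/
theorem stmt12 (W : ℝ → ℝ) (hWcont : Continuous W) (hWnonneg : ∀ s, 0 ≤ W s)
    (a b c : ℝ) (hac : a < c) (hcb : c < b)
    (hWzero : ∀ s, W s = 0 ↔ s = a ∨ s = b)
    (z : ℝ → ℝ) (hz : ∀ t, HasDerivAt z (Real.sqrt (W (z t))) t)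
    (hz0 : z 0 = c) (hzrange : ∀ t, z t ∈ Icc a b)
    (Cd K : ℝ) (hCd : 0 < Cd) (hK : 0 < K)
    (hdecA : ∀ t ≤ (0:ℝ), |z t - a| ≤ Cd * Real.exp (K * t))
    (hdecB : ∀ t ≥ (0:ℝ), |z t - b| ≤ Cd * Real.exp (-K * t)) :
    (∀ τ : ℝ, Integrable (fun t => z (t - τ) - (if t ≤ 0 then a else b)) volume) ∧
    Continuous (fun τ => ∫ t, (z (t - τ) - (if t ≤ 0 then a else b)) ∂volume) ∧
    StrictAnti (fun τ => ∫ t, (z (t - τ) - (if t ≤ 0 then a else b)) ∂volume) ∧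
    Function.Surjective (fun τ => ∫ t, (z (t - τ) - (if t ≤ 0 then a else b)) ∂volume) ∧
    (∀ r : ℝ, ∃! τ : ℝ, ∫ t, (z (t - τ) - (if t ≤ 0 then a else b)) ∂volume = r) := by
  have hab : a < b := hac.trans hcb
  have hzc : Continuous z := by
    rw [continuous_iff_continuousAt]; exact fun t => (hz t).continuousAt
  set sgn : ℝ → ℝ := fun t => if t ≤ 0 then a else b with hsgn
  have hsgnm : Measurable sgn :=
    Measurable.ite measurableSet_Iic measurable_const measurable_const
  set h : ℝ → ℝ := fun t => z t - sgn t with hh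
  have hmeas : AEStronglyMeasurable h volume :=
    (hzc.measurable.sub hsgnm).aestronglyMeasurable
  -- integrability of exp (K * t) on Iic 0
  have hexpIic : IntegrableOn (fun t => Real.exp (K * t)) (Iic (0:ℝ)) := by
    refine integrableOn_Iic_of_intervalIntegral_norm_bounded (1 / K) 0
      (fun y => (Real.continuous_exp.comp (continuous_const.mul continuous_id)).integrableOn_Ioc)
      tendsto_id ?_
    filter_upwards [Iic_mem_atBot 0] with y hy
    have h1 : (∫ x in y..0, ‖Real.exp (K * x)‖) = ∫ x in y..0, Real.exp (K * x) := by
      apply intervalIntegral.integral_congr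
      intro x _; exact Real.norm_of_nonneg (Real.exp_pos _).le
    simp only [id]
    rw [h1, intervalIntegral.integral_comp_mul_left (fun x => Real.exp x) hK.ne']
    rw [mul_zero]
    simp only [integral_exp, Real.exp_zero, smul_eq_mul, one_div]
    have h2 := Real.exp_pos (K * y)
    have h3 : 0 < K⁻¹ := inv_pos.mpr hK
    nlinarith
  -- integrability of h
  have h_int : Integrable h volume := by
    rw [← integrableOn_univ, ← Iic_union_Ioi (a := (0:ℝ))]
    apply IntegrableOn.union
    · apply Integrable.mono' (hexpIic.const_mul Cd) hmeas.restrict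
      filter_upwards [ae_restrict_mem measurableSet_Iic] with t ht
      have : sgn t = a := if_pos ht
      simp only [hh, this, Real.norm_eq_abs]
      exact hdecA t ht
    · apply Integrable.mono' ((exp_neg_integrableOn_Ioi 0 hK).const_mul Cd) hmeas.restrict
      filter_upwards [ae_restrict_mem measurableSet_Ioi] with t ht
      have : sgn t = b := if_neg (not_le.mpr ht)
      simp only [hh, this, Real.norm_eq_abs]
      exact hdecB t ht.le
  -- the difference of sgn's
  have d_eq : ∀ τ : ℝ, (fun t => sgn (t - τ) - sgn t)
      = (fun t => if 0 < τ then (Ioc 0 τ).indicator (fun _ => a - b) t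
          else (Ioc τ 0).indicator (fun _ => b - a) t) := by
    intro τ
    funext t
    rcases lt_or_ge 0 τ with hτ | hτ
    · rw [if_pos hτ]
      by_cases ht : t ≤ 0
      · have htτ : t - τ ≤ 0 := by linarith
        rw [hsgn]; simp only [if_pos ht, if_pos htτ]
        rw [Set.indicator_of_notMem (by simp only [mem_Ioc]; rintro ⟨h1, h2⟩; linarith)]
        ring
      · push_neg at ht
        by_cases htτ : t - τ ≤ 0
        · rw [hsgn]; simp only [if_pos htτ, if_neg (not_le.mpr ht)]
          rw [Set.indicator_of_mem (mem_Ioc.mpr ⟨ht, by linarith⟩)]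
        · rw [hsgn]; simp only [if_neg htτ, if_neg (not_le.mpr ht)]
          rw [Set.indicator_of_notMem (by simp only [mem_Ioc]; rintro ⟨h1, h2⟩; push_neg at htτ; linarith)]
          ring
    · rw [if_neg (not_lt.mpr hτ)]
      by_cases ht : t ≤ 0
      · by_cases htτ : t - τ ≤ 0
        · rw [hsgn]; simp only [if_pos ht, if_pos htτ]
          rw [Set.indicator_of_notMem (by simp only [mem_Ioc]; rintro ⟨h1, h2⟩; linarith)]
          ring
        · rw [hsgn]; simp only [if_pos ht, if_neg htτ]
          rw [Set.indicator_of_mem (mem_Ioc.mpr ⟨by push_neg at htτ; linarith, ht⟩)]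
      · push_neg at ht
        have htτ : ¬ (t - τ ≤ 0) := by push_neg; linarith
        rw [hsgn]; simp only [if_neg htτ, if_neg (not_le.mpr ht)]
        rw [Set.indicator_of_notMem (by simp only [mem_Ioc]; rintro ⟨h1, h2⟩; linarith)]
        ring
  -- integrability and integral of d
  have d_int : ∀ τ : ℝ, Integrable (fun t => sgn (t - τ) - sgn t) volume := by
    intro τ
    rw [d_eq τ]
    rcases lt_or_ge 0 τ with hτ | hτ
    · simp only [if_pos hτ]
      exact (integrable_indicator_iff measurableSet_Ioc).mpr
        ((integrableOn_const_iff).mpr (Or.inr (by simp [Real.volume_Ioc])))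
    · simp only [if_neg (not_lt.mpr hτ)]
      exact (integrable_indicator_iff measurableSet_Ioc).mpr
        ((integrableOn_const_iff).mpr (Or.inr (by simp [Real.volume_Ioc])))
  have d_integral : ∀ τ : ℝ, (∫ t, (sgn (t - τ) - sgn t) ∂volume) = (a - b) * τ := by
    intro τ
    rw [d_eq τ]
    rcases lt_or_ge 0 τ with hτ | hτ
    · simp only [if_pos hτ]
      rw [integral_indicator_const _ measurableSet_Ioc]
      rw [Real.volume_real_Ioc, smul_eq_mul]
      rw [max_eq_left (by linarith)]
      ring
    · simp only [if_neg (not_lt.mpr hτ)]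
      rw [integral_indicator_const _ measurableSet_Ioc]
      rw [Real.volume_real_Ioc, smul_eq_mul]
      rw [max_eq_left (by linarith)]
      ring
  -- decomposition of integrand
  have decomp : ∀ τ : ℝ, (fun t => z (t - τ) - (if t ≤ 0 then a else b))
      = fun t => h (t - τ) + (sgn (t - τ) - sgn t) := by
    intro τ; funext t; rw [hh, hsgn]; ring
  have F_int : ∀ τ : ℝ, Integrable (fun t => z (t - τ) - (if t ≤ 0 then a else b)) volume := by
    intro τ; rw [decomp τ]
    exact (h_int.comp_sub_right τ).add (d_int τ)
  set I0 : ℝ := ∫ t, h t ∂volume with hI0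
  have key : ∀ τ : ℝ, (∫ t, (z (t - τ) - (if t ≤ 0 then a else b)) ∂volume)
      = I0 + (a - b) * τ := by
    intro τ
    rw [decomp τ, integral_add (h_int.comp_sub_right τ) (d_int τ),
      integral_sub_right_eq_self h τ, d_integral τ]
  have Feq : (fun τ => ∫ t, (z (t - τ) - (if t ≤ 0 then a else b)) ∂volume)
      = fun τ => I0 + (a - b) * τ := funext key
  have hne : a - b ≠ 0 := sub_ne_zero.mpr (ne_of_lt hab)
  refine ⟨F_int, ?_, ?_, ?_, ?_⟩
  · rw [Feq]; exact continuous_const.add (continuous_const.mul continuous_id)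
  · intro x y hxy
    simp only [key]
    nlinarith
  · intro r
    refine ⟨(r - I0) / (a - b), ?_⟩
    simp only [key]
    field_simp
    ring
  · intro r
    refine ⟨(r - I0) / (a - b), ?_, fun τ' hτ' => ?_⟩
    · simp only [key]
      field_simp
      ring
    · simp only [key] at hτ'
      field_simp
      linarith
end
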